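/- The fixed point Q_{h,γ}* of the γ-discounted feasible Bellman operator converges pointwise, as γ → 1, to the undiscounted optimal feasible value Q_h*(s,a) = min_π max_{t∈ℕ} h(s_t) with s_0 = s, a_0 = a, in a finite deterministic MDP. -/

import Mathlib

/-- Trajectory induced by a deterministic policy `π` and transition `T` from state `s`. -/
def traj {S A : Type*} (T : S → A → S) (π : S → A) (s : S) : ℕ → S
  | 0 => s
  | t + 1 => T (traj T π s t) (π (traj T π s t))

/-- Trajectory starting with `s₀ = s`, `a₀ = a`, following policy `π` afterwards. -/
def trajA {S A : Type*} (T : S → A → S) (π : S → A) (s : S) (a : A) : ℕ → S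
  | 0 => s
  | t + 1 => traj T π (T s a) t

set_option linter.unusedSectionVars false

section aux
variable {S A : Type*} [Fintype S] [Nonempty S] [Fintype A] [Nonempty A]
variable (T : S → A → S) (π : S → A)

lemma traj_add (u : S) (t k : ℕ) :
    traj T π u (t + k) = traj T π (traj T π u k) t := by
  induction t with
  | zero => simp [traj]
  | succ t ih => rw [Nat.succ_add]; simp [traj, ih]

lemma traj_exists_lt (u : S) (t : ℕ) :
    ∃ t' < Fintype.card S, traj T π u t' = traj T π u t := by
  obtain ⟨i, j, hne, heq⟩ :=
    Fintype.exists_ne_map_eq_of_card_lt (fun i : Fin (Fintype.card S + 1) => traj T π u i)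
      (by simp)
  -- wlog i < j
  obtain ⟨i, j, hij, hjle, heq⟩ : ∃ i j : ℕ, i < j ∧ j ≤ Fintype.card S ∧
      traj T π u i = traj T π u j := by
    rcases lt_or_gt_of_ne hne with hlt | hlt
    · exact ⟨i, j, hlt, Nat.lt_succ_iff.mp j.isLt, heq⟩
    · exact ⟨j, i, hlt, Nat.lt_succ_iff.mp i.isLt, heq.symm⟩
  have hper : ∀ m, i ≤ m → traj T π u (m + (j - i)) = traj T π u m := by
    intro m hm
    have h1 : m + (j - i) = (m - i) + j := by omega
    have h2 : m = (m - i) + i := by omega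
    rw [h1, traj_add, ← heq, ← traj_add, ← h2]
  have key : ∀ t, ∃ t' < j, traj T π u t' = traj T π u t := by
    intro t
    induction t using Nat.strong_induction_on with
    | _ t ih =>
      by_cases ht : t < j
      · exact ⟨t, ht, rfl⟩
      · push_neg at ht
        obtain ⟨t', ht', he⟩ := ih (t - (j - i)) (by omega)
        refine ⟨t', ht', ?_⟩
        rw [he]
        have h2 : t = (t - (j - i)) + (j - i) := by omega
        conv_rhs => rw [h2]
        exact (hper (t - (j - i)) (by omega)).symm
  obtain ⟨t', ht', he⟩ := key t
  exact ⟨t', lt_of_lt_of_le ht' hjle, he⟩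

lemma trajA_exists_le (u : S) (a : A) (t : ℕ) :
    ∃ t' ≤ Fintype.card S, trajA T π u a t' = trajA T π u a t := by
  cases t with
  | zero => exact ⟨0, Nat.zero_le _, rfl⟩
  | succ k =>
    obtain ⟨k', hk', he⟩ := traj_exists_lt T π (T u a) k
    exact ⟨k' + 1, by omega, he⟩

lemma trajA_step (u : S) (a : A) (t : ℕ) :
    T (trajA T π u a t) (if t = 0 then a else π (trajA T π u a t)) = trajA T π u a (t + 1) := by
  cases t with
  | zero => simp [trajA, traj]
  | succ k => simp [trajA, traj]


variable (h : S → ℝ) (C : ℝ)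

lemma qfix_bound (hC : ∀ s, |h s| ≤ C) (γ : ℝ) (hγ1 : γ < 1) (hγ0 : 0 < γ)
    (Q : S → A → ℝ)
    (hQ : ∀ s a, Q s a = (1-γ) * h s + γ * max (h s) (⨅ a' : A, Q (T s a) a')) :
    ∀ s a, |Q s a| ≤ C := by
  set K := Finset.univ.sup' Finset.univ_nonempty (fun p : S × A => |Q p.1 p.2|) with hK
  have hKle : ∀ s a, |Q s a| ≤ K := fun s a =>
    Finset.le_sup' (f := fun p : S × A => |Q p.1 p.2|) (Finset.mem_univ (s, a))
  have hinf : ∀ s', |⨅ a' : A, Q s' a'| ≤ K := by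
    intro s'
    rw [abs_le]
    constructor
    · exact le_ciInf fun a' => (abs_le.mp (hKle s' a')).1
    · exact le_trans (ciInf_le (Finite.bddBelow_range _) (Classical.arbitrary A))
        ((abs_le.mp (hKle s' (Classical.arbitrary A))).2)
  have hKC : K ≤ C := by
    have hstep : ∀ (x : S) (y : A), |Q x y| ≤ (1 - γ) * C + γ * max C K := by
      intro x y
      have hm : |max (h x) (⨅ a' : A, Q (T x y) a')| ≤ max C K := by
        rcases max_choice (h x) (⨅ a' : A, Q (T x y) a') with he | he <;> rw [he]
        · exact le_max_of_le_left (hC x)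
        · exact le_max_of_le_right (hinf _)
      rw [hQ]
      calc |(1 - γ) * h x + γ * max (h x) (⨅ a' : A, Q (T x y) a')|
          ≤ (1 - γ) * |h x| + γ * |max (h x) (⨅ a' : A, Q (T x y) a')| := by
            refine (abs_add_le _ _).trans ?_
            rw [abs_mul, abs_mul, abs_of_nonneg (a := 1 - γ) (by linarith),
              abs_of_nonneg (a := γ) hγ0.le]
        _ ≤ (1 - γ) * C + γ * max C K := by
            gcongr
            · exact hC x
    have h2 : K ≤ (1 - γ) * C + γ * max C K := by
      rw [hK]
      exact Finset.sup'_le _ _ fun p _ => hstep p.1 p.2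
    rcases max_choice C K with hm | hm <;> rw [hm] at h2 <;> nlinarith
  exact fun s a => le_trans (hKle s a) hKC

lemma bddAbove_trajA (hC : ∀ s, |h s| ≤ C) (π : S → A) (s : S) (a : A) :
    BddAbove (Set.range fun t => h (trajA T π s a t)) :=
  ⟨C, by rintro x ⟨t, rfl⟩; exact (abs_le.mp (hC _)).2⟩

lemma iSup_trajA_attained (hC : ∀ s, |h s| ≤ C) (π : S → A) (s : S) (a : A) :
    ∃ t₀ ≤ Fintype.card S, (⨆ t, h (trajA T π s a t)) = h (trajA T π s a t₀) := by
  have hne : (Finset.range (Fintype.card S + 1)).Nonempty := by simp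
  set B := (Finset.range (Fintype.card S + 1)).sup' hne (fun t => h (trajA T π s a t)) with hB
  obtain ⟨t₀, ht₀, hBe⟩ := Finset.exists_mem_eq_sup' hne (fun t => h (trajA T π s a t))
  have hle : (⨆ t, h (trajA T π s a t)) ≤ B := by
    refine ciSup_le fun t => ?_
    obtain ⟨t', ht', he⟩ := trajA_exists_le T π s a t
    rw [← he]
    exact Finset.le_sup' (f := fun t => h (trajA T π s a t)) (Finset.mem_range.mpr (by omega))
  have hge : B ≤ ⨆ t, h (trajA T π s a t) :=
    Finset.sup'_le _ _ fun t _ => le_ciSup (bddAbove_trajA T h C hC π s a) t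
  exact ⟨t₀, by simpa using Nat.lt_succ_iff.mp (Finset.mem_range.mp ht₀), by
    rw [le_antisymm hle hge]; exact hBe⟩


lemma qfix_le (hC : ∀ s, |h s| ≤ C) (γ : ℝ) (hγ1 : γ < 1) (hγ0 : 0 < γ)
    (Q : S → A → ℝ)
    (hQ : ∀ s a, Q s a = (1 - γ) * h s + γ * max (h s) (⨅ a' : A, Q (T s a) a'))
    (π : S → A) (s : S) (a : A) :
    Q s a ≤ ⨆ t, h (trajA T π s a t) := by
  have hQb := qfix_bound T h C hC γ hγ1 hγ0 Q hQ
  have hC0 : 0 ≤ C := le_trans (abs_nonneg _) (hC s)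
  set σ : ℕ → S := trajA T π s a with hσ
  set M : ℝ := ⨆ t, h (σ t) with hM
  by_contra hcon
  push_neg at hcon
  have hbdd := bddAbove_trajA T h C hC π s a
  have hMge : ∀ t, h (σ t) ≤ M := fun t => le_ciSup hbdd t
  have hMlb : -C ≤ M := le_trans (abs_le.mp (hC (σ 0))).1 (hMge 0)
  set q : ℕ → ℝ := fun t => Q (σ t) (if t = 0 then a else π (σ t)) with hq
  have hq0 : q 0 = Q s a := by simp [hq, hσ, trajA]
  have hstep : ∀ t, q t ≤ (1 - γ) * h (σ t) + γ * max (h (σ t)) (q (t + 1)) := by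
    intro t
    have h1 : (⨅ a' : A, Q (σ (t + 1)) a') ≤ q (t + 1) := by
      have := ciInf_le (Finite.bddBelow_range fun a' => Q (σ (t + 1)) a')
        (if t + 1 = 0 then a else π (σ (t + 1)))
      simpa [hq] using this
    calc q t = (1 - γ) * h (σ t)
          + γ * max (h (σ t)) (⨅ a' : A, Q (T (σ t) (if t = 0 then a else π (σ t))) a') := hQ _ _
      _ = (1 - γ) * h (σ t) + γ * max (h (σ t)) (⨅ a' : A, Q (σ (t + 1)) a') := by
          rw [hσ, trajA_step T π s a t]
      _ ≤ _ := by
          have h2 := max_le_max (le_refl (h (σ t))) h1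
          nlinarith [mul_nonneg hγ0.le (sub_nonneg.mpr h2)]
  have hind : ∀ t, Q s a - M ≤ γ ^ t * (q t - M) := by
    intro t
    induction t with
    | zero => simp [hq0]
    | succ t ih =>
      have hγt : (0:ℝ) < γ ^ t := pow_pos hγ0 t
      have hqt : M < q t := by nlinarith
      have hnext : q t ≤ (1 - γ) * M + γ * max M (q (t + 1)) := by
        refine le_trans (hstep t) ?_
        have h2 := max_le_max (hMge t) (le_refl (q (t + 1)))
        nlinarith [mul_nonneg (by linarith : (0:ℝ) ≤ 1 - γ) (sub_nonneg.mpr (hMge t)),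
          mul_nonneg hγ0.le (sub_nonneg.mpr h2)]
      have hMq : M < q (t + 1) := by
        by_contra hle
        push_neg at hle
        rw [max_eq_left hle] at hnext
        nlinarith
      rw [max_eq_right hMq.le] at hnext
      have h2 : q t - M ≤ γ * (q (t + 1) - M) := by nlinarith
      calc Q s a - M ≤ γ ^ t * (q t - M) := ih
        _ ≤ γ ^ t * (γ * (q (t + 1) - M)) := by
            exact mul_le_mul_of_nonneg_left h2 hγt.le
        _ = γ ^ (t + 1) * (q (t + 1) - M) := by ring
  obtain ⟨n, hn⟩ := exists_pow_lt_of_lt_one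
    (show (0:ℝ) < (Q s a - M) / (2 * C + 1) from div_pos (by linarith) (by linarith)) hγ1
  have hqn : q n - M ≤ 2 * C + 1 := by
    have := (abs_le.mp (hQb (σ n) (if n = 0 then a else π (σ n)))).2
    have : q n ≤ C := this
    linarith
  have hγn : (0:ℝ) < γ ^ n := pow_pos hγ0 n
  have := hind n
  have h3 : γ ^ n * (q n - M) ≤ γ ^ n * (2 * C + 1) :=
    mul_le_mul_of_nonneg_left hqn hγn.le
  have h4 : γ ^ n * (2 * C + 1) < Q s a - M :=
    (lt_div_iff₀ (by linarith)).mp hn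
  linarith


lemma qfix_ge (hC : ∀ s, |h s| ≤ C) (γ : ℝ) (hγ1 : γ < 1) (hγ0 : 0 < γ)
    (Q : S → A → ℝ)
    (hQ : ∀ s a, Q s a = (1 - γ) * h s + γ * max (h s) (⨅ a' : A, Q (T s a) a'))
    (s : S) (a : A) :
    (⨅ π : S → A, ⨆ t, h (trajA T π s a t))
      ≤ Q s a + 2 * C * (1 - γ ^ (Fintype.card S + 1)) := by
  have hQb := qfix_bound T h C hC γ hγ1 hγ0 Q hQ
  have hC0 : 0 ≤ C := le_trans (abs_nonneg _) (hC s)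
  have hgreedy : ∀ s', ∃ a', Q s' a' = ⨅ a'' : A, Q s' a'' := by
    intro s'
    obtain ⟨a', ha'⟩ := Finite.exists_min (fun a' => Q s' a')
    exact ⟨a', le_antisymm (le_ciInf ha') (ciInf_le (Finite.bddBelow_range _) a')⟩
  choose π hπ using hgreedy
  set σ : ℕ → S := trajA T π s a with hσ
  set q : ℕ → ℝ := fun t => Q (σ t) (if t = 0 then a else π (σ t)) with hq
  have hq0 : q 0 = Q s a := by simp [hq, hσ, trajA]
  have heq : ∀ t, q t = (1 - γ) * h (σ t) + γ * max (h (σ t)) (q (t + 1)) := by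
    intro t
    have h1 : (⨅ a'' : A, Q (σ (t + 1)) a'') = q (t + 1) := by
      rw [← hπ (σ (t + 1))]
      simp [hq]
    calc q t = (1 - γ) * h (σ t)
          + γ * max (h (σ t)) (⨅ a'' : A, Q (T (σ t) (if t = 0 then a else π (σ t))) a'') :=
          hQ _ _
      _ = (1 - γ) * h (σ t) + γ * max (h (σ t)) (⨅ a'' : A, Q (σ (t + 1)) a'') := by
          rw [hσ, trajA_step T π s a t]
      _ = _ := by rw [h1]
  have hge_h : ∀ t, h (σ t) ≤ q t := by
    intro t
    rw [heq t]
    have h2 : h (σ t) ≤ max (h (σ t)) (q (t + 1)) := le_max_left _ _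
    nlinarith [mul_nonneg hγ0.le (sub_nonneg.mpr h2)]
  have hrec : ∀ t, -(1 - γ) * C + γ * q (t + 1) ≤ q t := by
    intro t
    rw [heq t]
    have h2 : q (t + 1) ≤ max (h (σ t)) (q (t + 1)) := le_max_right _ _
    have h3 : -C ≤ h (σ t) := (abs_le.mp (hC _)).1
    nlinarith [mul_nonneg hγ0.le (sub_nonneg.mpr h2)]
  have hind : ∀ t, γ ^ t * q t - (1 - γ ^ t) * C ≤ q 0 := by
    intro t
    induction t with
    | zero => simp
    | succ t ih =>
      have hγt : (0:ℝ) < γ ^ t := pow_pos hγ0 t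
      have h2 := mul_le_mul_of_nonneg_left (hrec t) hγt.le
      calc γ ^ (t + 1) * q (t + 1) - (1 - γ ^ (t + 1)) * C
          = γ ^ t * (-(1 - γ) * C + γ * q (t + 1)) - (1 - γ ^ t) * C := by ring
        _ ≤ γ ^ t * q t - (1 - γ ^ t) * C := by linarith
        _ ≤ q 0 := ih
  have hkey : ∀ t, h (σ t) ≤ q 0 + 2 * (1 - γ ^ t) * C := by
    intro t
    have hγt : (0:ℝ) < γ ^ t := pow_pos hγ0 t
    have hγt1 : γ ^ t ≤ 1 := pow_le_one₀ hγ0.le hγ1.le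
    have h2 := mul_le_mul_of_nonneg_left (hge_h t) hγt.le
    have h3 : (1 - γ ^ t) * h (σ t) ≤ (1 - γ ^ t) * C :=
      mul_le_mul_of_nonneg_left ((abs_le.mp (hC _)).2) (by linarith)
    have h4 := hind t
    nlinarith
  obtain ⟨t₀, ht₀, hsup⟩ := iSup_trajA_attained T h C hC π s a
  have hγN : γ ^ (Fintype.card S + 1) ≤ γ ^ t₀ :=
    pow_le_pow_of_le_one hγ0.le hγ1.le (by omega)
  have hF : (⨆ t, h (trajA T π s a t)) ≤ Q s a + 2 * C * (1 - γ ^ (Fintype.card S + 1)) := by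
    rw [hsup]
    have := hkey t₀
    rw [hq0] at this
    nlinarith
  refine le_trans (ciInf_le ?_ π) hF
  refine ⟨-C, ?_⟩
  rintro x ⟨π', rfl⟩
  refine le_trans ?_ (le_ciSup (bddAbove_trajA T h C hC π' s a) 0)
  exact (abs_le.mp (hC _)).1

end aux

/-- The fixed point `Q_{h,γ}*` of the γ-discounted feasible Bellman operator converges pointwise
as `γ → 1` to the undiscounted optimal feasible value
`Q_h*(s,a) = min_π max_t h(s_t)` in a finite deterministic MDP. -/
theorem stmt5 {S A : Type*} [Fintype S] [Nonempty S] [Fintype A] [Nonempty A]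
    (T : S → A → S) (h : S → ℝ)
    (Qfix : ℝ → S → A → ℝ)
    (hfix : ∀ γ ∈ Set.Ioo (0 : ℝ) 1, ∀ s a,
      Qfix γ s a = (1 - γ) * h s + γ * max (h s) (⨅ a' : A, Qfix γ (T s a) a'))
    (s : S) (a : A) :
    Filter.Tendsto (fun γ => Qfix γ s a) (nhdsWithin 1 (Set.Ioo (0 : ℝ) 1))
      (nhds (⨅ π : S → A, ⨆ t : ℕ, h (trajA T π s a t))) := by
  classical
  set C : ℝ := Finset.univ.sup' Finset.univ_nonempty (fun s => |h s|) with hCdef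
  have hC : ∀ x, |h x| ≤ C := fun x =>
    Finset.le_sup' (f := fun x => |h x|) (Finset.mem_univ x)
  set Qstar : ℝ := ⨅ π : S → A, ⨆ t : ℕ, h (trajA T π s a t) with hQs
  have hub : ∀ γ ∈ Set.Ioo (0:ℝ) 1, Qfix γ s a ≤ Qstar :=
    fun γ hγ => le_ciInf fun π => qfix_le T h C hC γ hγ.2 hγ.1 (Qfix γ) (hfix γ hγ) π s a
  have hlb : ∀ γ ∈ Set.Ioo (0:ℝ) 1,
      Qstar - 2 * C * (1 - γ ^ (Fintype.card S + 1)) ≤ Qfix γ s a := by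
    intro γ hγ
    have := qfix_ge T h C hC γ hγ.2 hγ.1 (Qfix γ) (hfix γ hγ) s a
    rw [← hQs] at this
    linarith
  have htend : Filter.Tendsto (fun γ : ℝ => Qstar - 2 * C * (1 - γ ^ (Fintype.card S + 1)))
      (nhdsWithin 1 (Set.Ioo (0:ℝ) 1)) (nhds Qstar) := by
    have hcont : Continuous fun γ : ℝ => Qstar - 2 * C * (1 - γ ^ (Fintype.card S + 1)) :=
      continuous_const.sub (continuous_const.mul (continuous_const.sub (continuous_pow _)))
    have h1 := hcont.tendsto 1
    simp only [one_pow, sub_self, mul_zero, sub_zero] at h1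
    exact h1.mono_left nhdsWithin_le_nhds
  refine tendsto_of_tendsto_of_tendsto_of_le_of_le' htend tendsto_const_nhds ?_ ?_
  · filter_upwards [self_mem_nhdsWithin] with γ hγ using hlb γ hγ
  · filter_upwards [self_mem_nhdsWithin] with γ hγ using hub γ hγ
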